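/- Let R' be an algebraic curvature tensor on ℝ³, and let R be the algebraic curvature tensor on ℝ⁴ = ℝ³ × ℝ extending R' trivially, i.e., R_{abcd} = R'_{abcd} when all of a,b,c,d ∈ {1,2,3}, and R_{abcd} = 0 whenever any index equals 4. Then R is an algebraic curvature tensor on ℝ⁴, and the component (i=j=4) of the 4-dimensional curvature identity applied to R yields exactly (1/4)|R'|² − |ρ'|² + (τ')²/4 = 0. -/
import Mathlib


/-- Ricci tensor of an algebraic curvature tensor, `ρ i j = ∑ a, R a i j a`
(sign convention so that ρ is the usual Ricci contraction). -/
def Ric {n : ℕ} (R : Fin n → Fin n → Fin n → Fin n → ℝ) (i j : Fin n) : ℝ :=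
  ∑ a, R a i j a

/-- Scalar curvature `τ = ∑ i, ρ i i`. -/
def scalCurv {n : ℕ} (R : Fin n → Fin n → Fin n → Fin n → ℝ) : ℝ :=
  ∑ i, Ric R i i

/-- Squared norm of the curvature tensor, `|R|² = ∑ R_{ijkl}²`. -/
def normR2 {n : ℕ} (R : Fin n → Fin n → Fin n → Fin n → ℝ) : ℝ :=
  ∑ i, ∑ j, ∑ k, ∑ l, (R i j k l) ^ 2

/-- Squared norm of the Ricci tensor, `|ρ|² = ∑ ρ_{ij}²`. -/
def normRic2 {n : ℕ} (R : Fin n → Fin n → Fin n → Fin n → ℝ) : ℝ :=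
  ∑ i, ∑ j, (Ric R i j) ^ 2

/-- `R` is an algebraic curvature tensor: antisymmetry in the first and last pairs,
pair-interchange symmetry, and the first Bianchi identity. -/
def IsACT {n : ℕ} (R : Fin n → Fin n → Fin n → Fin n → ℝ) : Prop :=
  (∀ i j k l, R i j k l = - R j i k l) ∧
  (∀ i j k l, R i j k l = - R i j l k) ∧
  (∀ i j k l, R i j k l = R k l i j) ∧
  (∀ i j k l, R i j k l + R j k i l + R k i j l = 0)

/-- helper map Fin 4 → Fin 3 -/
def m4 (i : Fin 4) : Fin 3 := if h : (i : ℕ) < 3 then ⟨i, h⟩ else 0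

/-- Kronecker delta. -/
def kron {n : ℕ} (i j : Fin n) : ℝ := if i = j then 1 else 0

set_option maxHeartbeats 2000000 in
theorem product_with_line_identity (R' : Fin 3 → Fin 3 → Fin 3 → Fin 3 → ℝ) (hR : IsACT R')
    (R : Fin 4 → Fin 4 → Fin 4 → Fin 4 → ℝ)
    (hext : ∀ a b c d : Fin 3,
      R a.castSucc b.castSucc c.castSucc d.castSucc = R' a b c d)
    (hzero : ∀ a b c d : Fin 4, a = 3 ∨ b = 3 ∨ c = 3 ∨ d = 3 → R a b c d = 0) :
    IsACT R ∧
    ((∑ a, ∑ b, ∑ c, R a b c 3 * R a b c 3) - 2 * (∑ a, Ric R 3 a * Ric R 3 a)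
        - 2 * (∑ a, ∑ b, Ric R a b * R 3 a b 3) + scalCurv R * Ric R 3 3
        - (1 / 4) * (normR2 R - 4 * normRic2 R + (scalCurv R) ^ 2)
      = -((1 / 4) * normR2 R' - normRic2 R' + (scalCurv R') ^ 2 / 4)) ∧
    (1 / 4) * normR2 R' - normRic2 R' + (scalCurv R') ^ 2 / 4 = 0 := by
  obtain ⟨h1, h2, h3, h4⟩ := hR
  have lift : ∀ x : Fin 4, x ≠ 3 → x = (m4 x).castSucc := by
    intro x hx
    have hx' : (x : ℕ) < 3 := by
      have h1 := x.isLt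
      have h2 : (x : ℕ) ≠ 3 := fun h => hx (Fin.ext (by simpa using h))
      omega
    apply Fin.ext
    simp [m4, hx']
  have hm : ∀ a : Fin 3, m4 a.castSucc = a := by decide
  have hRR : ∀ i j k l : Fin 4, R i j k l =
      if i = 3 ∨ j = 3 ∨ k = 3 ∨ l = 3 then 0
      else R' (m4 i) (m4 j) (m4 k) (m4 l) := by
    intro i j k l
    split_ifs with h
    · exact hzero i j k l h
    · push_neg at h
      obtain ⟨hi, hj, hk, hl⟩ := h
      rw [← hext (m4 i) (m4 j) (m4 k) (m4 l), ← lift i hi, ← lift j hj,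
        ← lift k hk, ← lift l hl]
  have hact : IsACT R := by
    refine ⟨?_, ?_, ?_, ?_⟩ <;> intro i j k l
    · rw [hRR i j k l, hRR j i k l]
      split_ifs
      · ring
      · exfalso; tauto
      · exfalso; tauto
      · exact h1 _ _ _ _
    · rw [hRR i j k l, hRR i j l k]
      split_ifs
      · ring
      · exfalso; tauto
      · exfalso; tauto
      · exact h2 _ _ _ _
    · rw [hRR i j k l, hRR k l i j]
      split_ifs
      · ring
      · exfalso; tauto
      · exfalso; tauto
      · exact h3 _ _ _ _
    · rw [hRR i j k l, hRR j k i l, hRR k i j l]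
      split_ifs <;> first | ring1 | exact h4 _ _ _ _ | (exfalso; tauto)
  refine ⟨hact, ?_, ?_⟩
  · have := hRR
    have z0003 : R 0 0 0 3 = 0 := hzero 0 0 0 3 (Or.inr (Or.inr (Or.inr rfl)))
    have z0013 : R 0 0 1 3 = 0 := hzero 0 0 1 3 (Or.inr (Or.inr (Or.inr rfl)))
    have z0023 : R 0 0 2 3 = 0 := hzero 0 0 2 3 (Or.inr (Or.inr (Or.inr rfl)))
    have z0030 : R 0 0 3 0 = 0 := hzero 0 0 3 0 (Or.inr (Or.inr (Or.inl rfl)))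
    have z0031 : R 0 0 3 1 = 0 := hzero 0 0 3 1 (Or.inr (Or.inr (Or.inl rfl)))
    have z0032 : R 0 0 3 2 = 0 := hzero 0 0 3 2 (Or.inr (Or.inr (Or.inl rfl)))
    have z0033 : R 0 0 3 3 = 0 := hzero 0 0 3 3 (Or.inr (Or.inr (Or.inl rfl)))
    have z0103 : R 0 1 0 3 = 0 := hzero 0 1 0 3 (Or.inr (Or.inr (Or.inr rfl)))
    have z0113 : R 0 1 1 3 = 0 := hzero 0 1 1 3 (Or.inr (Or.inr (Or.inr rfl)))
    have z0123 : R 0 1 2 3 = 0 := hzero 0 1 2 3 (Or.inr (Or.inr (Or.inr rfl)))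
    have z0130 : R 0 1 3 0 = 0 := hzero 0 1 3 0 (Or.inr (Or.inr (Or.inl rfl)))
    have z0131 : R 0 1 3 1 = 0 := hzero 0 1 3 1 (Or.inr (Or.inr (Or.inl rfl)))
    have z0132 : R 0 1 3 2 = 0 := hzero 0 1 3 2 (Or.inr (Or.inr (Or.inl rfl)))
    have z0133 : R 0 1 3 3 = 0 := hzero 0 1 3 3 (Or.inr (Or.inr (Or.inl rfl)))
    have z0203 : R 0 2 0 3 = 0 := hzero 0 2 0 3 (Or.inr (Or.inr (Or.inr rfl)))
    have z0213 : R 0 2 1 3 = 0 := hzero 0 2 1 3 (Or.inr (Or.inr (Or.inr rfl)))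
    have z0223 : R 0 2 2 3 = 0 := hzero 0 2 2 3 (Or.inr (Or.inr (Or.inr rfl)))
    have z0230 : R 0 2 3 0 = 0 := hzero 0 2 3 0 (Or.inr (Or.inr (Or.inl rfl)))
    have z0231 : R 0 2 3 1 = 0 := hzero 0 2 3 1 (Or.inr (Or.inr (Or.inl rfl)))
    have z0232 : R 0 2 3 2 = 0 := hzero 0 2 3 2 (Or.inr (Or.inr (Or.inl rfl)))
    have z0233 : R 0 2 3 3 = 0 := hzero 0 2 3 3 (Or.inr (Or.inr (Or.inl rfl)))
    have z0300 : R 0 3 0 0 = 0 := hzero 0 3 0 0 (Or.inr (Or.inl rfl))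
    have z0301 : R 0 3 0 1 = 0 := hzero 0 3 0 1 (Or.inr (Or.inl rfl))
    have z0302 : R 0 3 0 2 = 0 := hzero 0 3 0 2 (Or.inr (Or.inl rfl))
    have z0303 : R 0 3 0 3 = 0 := hzero 0 3 0 3 (Or.inr (Or.inl rfl))
    have z0310 : R 0 3 1 0 = 0 := hzero 0 3 1 0 (Or.inr (Or.inl rfl))
    have z0311 : R 0 3 1 1 = 0 := hzero 0 3 1 1 (Or.inr (Or.inl rfl))
    have z0312 : R 0 3 1 2 = 0 := hzero 0 3 1 2 (Or.inr (Or.inl rfl))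
    have z0313 : R 0 3 1 3 = 0 := hzero 0 3 1 3 (Or.inr (Or.inl rfl))
    have z0320 : R 0 3 2 0 = 0 := hzero 0 3 2 0 (Or.inr (Or.inl rfl))
    have z0321 : R 0 3 2 1 = 0 := hzero 0 3 2 1 (Or.inr (Or.inl rfl))
    have z0322 : R 0 3 2 2 = 0 := hzero 0 3 2 2 (Or.inr (Or.inl rfl))
    have z0323 : R 0 3 2 3 = 0 := hzero 0 3 2 3 (Or.inr (Or.inl rfl))
    have z0330 : R 0 3 3 0 = 0 := hzero 0 3 3 0 (Or.inr (Or.inl rfl))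
    have z0331 : R 0 3 3 1 = 0 := hzero 0 3 3 1 (Or.inr (Or.inl rfl))
    have z0332 : R 0 3 3 2 = 0 := hzero 0 3 3 2 (Or.inr (Or.inl rfl))
    have z0333 : R 0 3 3 3 = 0 := hzero 0 3 3 3 (Or.inr (Or.inl rfl))
    have z1003 : R 1 0 0 3 = 0 := hzero 1 0 0 3 (Or.inr (Or.inr (Or.inr rfl)))
    have z1013 : R 1 0 1 3 = 0 := hzero 1 0 1 3 (Or.inr (Or.inr (Or.inr rfl)))
    have z1023 : R 1 0 2 3 = 0 := hzero 1 0 2 3 (Or.inr (Or.inr (Or.inr rfl)))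
    have z1030 : R 1 0 3 0 = 0 := hzero 1 0 3 0 (Or.inr (Or.inr (Or.inl rfl)))
    have z1031 : R 1 0 3 1 = 0 := hzero 1 0 3 1 (Or.inr (Or.inr (Or.inl rfl)))
    have z1032 : R 1 0 3 2 = 0 := hzero 1 0 3 2 (Or.inr (Or.inr (Or.inl rfl)))
    have z1033 : R 1 0 3 3 = 0 := hzero 1 0 3 3 (Or.inr (Or.inr (Or.inl rfl)))
    have z1103 : R 1 1 0 3 = 0 := hzero 1 1 0 3 (Or.inr (Or.inr (Or.inr rfl)))
    have z1113 : R 1 1 1 3 = 0 := hzero 1 1 1 3 (Or.inr (Or.inr (Or.inr rfl)))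
    have z1123 : R 1 1 2 3 = 0 := hzero 1 1 2 3 (Or.inr (Or.inr (Or.inr rfl)))
    have z1130 : R 1 1 3 0 = 0 := hzero 1 1 3 0 (Or.inr (Or.inr (Or.inl rfl)))
    have z1131 : R 1 1 3 1 = 0 := hzero 1 1 3 1 (Or.inr (Or.inr (Or.inl rfl)))
    have z1132 : R 1 1 3 2 = 0 := hzero 1 1 3 2 (Or.inr (Or.inr (Or.inl rfl)))
    have z1133 : R 1 1 3 3 = 0 := hzero 1 1 3 3 (Or.inr (Or.inr (Or.inl rfl)))
    have z1203 : R 1 2 0 3 = 0 := hzero 1 2 0 3 (Or.inr (Or.inr (Or.inr rfl)))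
    have z1213 : R 1 2 1 3 = 0 := hzero 1 2 1 3 (Or.inr (Or.inr (Or.inr rfl)))
    have z1223 : R 1 2 2 3 = 0 := hzero 1 2 2 3 (Or.inr (Or.inr (Or.inr rfl)))
    have z1230 : R 1 2 3 0 = 0 := hzero 1 2 3 0 (Or.inr (Or.inr (Or.inl rfl)))
    have z1231 : R 1 2 3 1 = 0 := hzero 1 2 3 1 (Or.inr (Or.inr (Or.inl rfl)))
    have z1232 : R 1 2 3 2 = 0 := hzero 1 2 3 2 (Or.inr (Or.inr (Or.inl rfl)))
    have z1233 : R 1 2 3 3 = 0 := hzero 1 2 3 3 (Or.inr (Or.inr (Or.inl rfl)))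
    have z1300 : R 1 3 0 0 = 0 := hzero 1 3 0 0 (Or.inr (Or.inl rfl))
    have z1301 : R 1 3 0 1 = 0 := hzero 1 3 0 1 (Or.inr (Or.inl rfl))
    have z1302 : R 1 3 0 2 = 0 := hzero 1 3 0 2 (Or.inr (Or.inl rfl))
    have z1303 : R 1 3 0 3 = 0 := hzero 1 3 0 3 (Or.inr (Or.inl rfl))
    have z1310 : R 1 3 1 0 = 0 := hzero 1 3 1 0 (Or.inr (Or.inl rfl))
    have z1311 : R 1 3 1 1 = 0 := hzero 1 3 1 1 (Or.inr (Or.inl rfl))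
    have z1312 : R 1 3 1 2 = 0 := hzero 1 3 1 2 (Or.inr (Or.inl rfl))
    have z1313 : R 1 3 1 3 = 0 := hzero 1 3 1 3 (Or.inr (Or.inl rfl))
    have z1320 : R 1 3 2 0 = 0 := hzero 1 3 2 0 (Or.inr (Or.inl rfl))
    have z1321 : R 1 3 2 1 = 0 := hzero 1 3 2 1 (Or.inr (Or.inl rfl))
    have z1322 : R 1 3 2 2 = 0 := hzero 1 3 2 2 (Or.inr (Or.inl rfl))
    have z1323 : R 1 3 2 3 = 0 := hzero 1 3 2 3 (Or.inr (Or.inl rfl))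
    have z1330 : R 1 3 3 0 = 0 := hzero 1 3 3 0 (Or.inr (Or.inl rfl))
    have z1331 : R 1 3 3 1 = 0 := hzero 1 3 3 1 (Or.inr (Or.inl rfl))
    have z1332 : R 1 3 3 2 = 0 := hzero 1 3 3 2 (Or.inr (Or.inl rfl))
    have z1333 : R 1 3 3 3 = 0 := hzero 1 3 3 3 (Or.inr (Or.inl rfl))
    have z2003 : R 2 0 0 3 = 0 := hzero 2 0 0 3 (Or.inr (Or.inr (Or.inr rfl)))
    have z2013 : R 2 0 1 3 = 0 := hzero 2 0 1 3 (Or.inr (Or.inr (Or.inr rfl)))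
    have z2023 : R 2 0 2 3 = 0 := hzero 2 0 2 3 (Or.inr (Or.inr (Or.inr rfl)))
    have z2030 : R 2 0 3 0 = 0 := hzero 2 0 3 0 (Or.inr (Or.inr (Or.inl rfl)))
    have z2031 : R 2 0 3 1 = 0 := hzero 2 0 3 1 (Or.inr (Or.inr (Or.inl rfl)))
    have z2032 : R 2 0 3 2 = 0 := hzero 2 0 3 2 (Or.inr (Or.inr (Or.inl rfl)))
    have z2033 : R 2 0 3 3 = 0 := hzero 2 0 3 3 (Or.inr (Or.inr (Or.inl rfl)))
    have z2103 : R 2 1 0 3 = 0 := hzero 2 1 0 3 (Or.inr (Or.inr (Or.inr rfl)))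
    have z2113 : R 2 1 1 3 = 0 := hzero 2 1 1 3 (Or.inr (Or.inr (Or.inr rfl)))
    have z2123 : R 2 1 2 3 = 0 := hzero 2 1 2 3 (Or.inr (Or.inr (Or.inr rfl)))
    have z2130 : R 2 1 3 0 = 0 := hzero 2 1 3 0 (Or.inr (Or.inr (Or.inl rfl)))
    have z2131 : R 2 1 3 1 = 0 := hzero 2 1 3 1 (Or.inr (Or.inr (Or.inl rfl)))
    have z2132 : R 2 1 3 2 = 0 := hzero 2 1 3 2 (Or.inr (Or.inr (Or.inl rfl)))
    have z2133 : R 2 1 3 3 = 0 := hzero 2 1 3 3 (Or.inr (Or.inr (Or.inl rfl)))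
    have z2203 : R 2 2 0 3 = 0 := hzero 2 2 0 3 (Or.inr (Or.inr (Or.inr rfl)))
    have z2213 : R 2 2 1 3 = 0 := hzero 2 2 1 3 (Or.inr (Or.inr (Or.inr rfl)))
    have z2223 : R 2 2 2 3 = 0 := hzero 2 2 2 3 (Or.inr (Or.inr (Or.inr rfl)))
    have z2230 : R 2 2 3 0 = 0 := hzero 2 2 3 0 (Or.inr (Or.inr (Or.inl rfl)))
    have z2231 : R 2 2 3 1 = 0 := hzero 2 2 3 1 (Or.inr (Or.inr (Or.inl rfl)))
    have z2232 : R 2 2 3 2 = 0 := hzero 2 2 3 2 (Or.inr (Or.inr (Or.inl rfl)))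
    have z2233 : R 2 2 3 3 = 0 := hzero 2 2 3 3 (Or.inr (Or.inr (Or.inl rfl)))
    have z2300 : R 2 3 0 0 = 0 := hzero 2 3 0 0 (Or.inr (Or.inl rfl))
    have z2301 : R 2 3 0 1 = 0 := hzero 2 3 0 1 (Or.inr (Or.inl rfl))
    have z2302 : R 2 3 0 2 = 0 := hzero 2 3 0 2 (Or.inr (Or.inl rfl))
    have z2303 : R 2 3 0 3 = 0 := hzero 2 3 0 3 (Or.inr (Or.inl rfl))
    have z2310 : R 2 3 1 0 = 0 := hzero 2 3 1 0 (Or.inr (Or.inl rfl))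
    have z2311 : R 2 3 1 1 = 0 := hzero 2 3 1 1 (Or.inr (Or.inl rfl))
    have z2312 : R 2 3 1 2 = 0 := hzero 2 3 1 2 (Or.inr (Or.inl rfl))
    have z2313 : R 2 3 1 3 = 0 := hzero 2 3 1 3 (Or.inr (Or.inl rfl))
    have z2320 : R 2 3 2 0 = 0 := hzero 2 3 2 0 (Or.inr (Or.inl rfl))
    have z2321 : R 2 3 2 1 = 0 := hzero 2 3 2 1 (Or.inr (Or.inl rfl))
    have z2322 : R 2 3 2 2 = 0 := hzero 2 3 2 2 (Or.inr (Or.inl rfl))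
    have z2323 : R 2 3 2 3 = 0 := hzero 2 3 2 3 (Or.inr (Or.inl rfl))
    have z2330 : R 2 3 3 0 = 0 := hzero 2 3 3 0 (Or.inr (Or.inl rfl))
    have z2331 : R 2 3 3 1 = 0 := hzero 2 3 3 1 (Or.inr (Or.inl rfl))
    have z2332 : R 2 3 3 2 = 0 := hzero 2 3 3 2 (Or.inr (Or.inl rfl))
    have z2333 : R 2 3 3 3 = 0 := hzero 2 3 3 3 (Or.inr (Or.inl rfl))
    have z3000 : R 3 0 0 0 = 0 := hzero 3 0 0 0 (Or.inl rfl)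
    have z3001 : R 3 0 0 1 = 0 := hzero 3 0 0 1 (Or.inl rfl)
    have z3002 : R 3 0 0 2 = 0 := hzero 3 0 0 2 (Or.inl rfl)
    have z3003 : R 3 0 0 3 = 0 := hzero 3 0 0 3 (Or.inl rfl)
    have z3010 : R 3 0 1 0 = 0 := hzero 3 0 1 0 (Or.inl rfl)
    have z3011 : R 3 0 1 1 = 0 := hzero 3 0 1 1 (Or.inl rfl)
    have z3012 : R 3 0 1 2 = 0 := hzero 3 0 1 2 (Or.inl rfl)
    have z3013 : R 3 0 1 3 = 0 := hzero 3 0 1 3 (Or.inl rfl)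
    have z3020 : R 3 0 2 0 = 0 := hzero 3 0 2 0 (Or.inl rfl)
    have z3021 : R 3 0 2 1 = 0 := hzero 3 0 2 1 (Or.inl rfl)
    have z3022 : R 3 0 2 2 = 0 := hzero 3 0 2 2 (Or.inl rfl)
    have z3023 : R 3 0 2 3 = 0 := hzero 3 0 2 3 (Or.inl rfl)
    have z3030 : R 3 0 3 0 = 0 := hzero 3 0 3 0 (Or.inl rfl)
    have z3031 : R 3 0 3 1 = 0 := hzero 3 0 3 1 (Or.inl rfl)
    have z3032 : R 3 0 3 2 = 0 := hzero 3 0 3 2 (Or.inl rfl)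
    have z3033 : R 3 0 3 3 = 0 := hzero 3 0 3 3 (Or.inl rfl)
    have z3100 : R 3 1 0 0 = 0 := hzero 3 1 0 0 (Or.inl rfl)
    have z3101 : R 3 1 0 1 = 0 := hzero 3 1 0 1 (Or.inl rfl)
    have z3102 : R 3 1 0 2 = 0 := hzero 3 1 0 2 (Or.inl rfl)
    have z3103 : R 3 1 0 3 = 0 := hzero 3 1 0 3 (Or.inl rfl)
    have z3110 : R 3 1 1 0 = 0 := hzero 3 1 1 0 (Or.inl rfl)
    have z3111 : R 3 1 1 1 = 0 := hzero 3 1 1 1 (Or.inl rfl)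
    have z3112 : R 3 1 1 2 = 0 := hzero 3 1 1 2 (Or.inl rfl)
    have z3113 : R 3 1 1 3 = 0 := hzero 3 1 1 3 (Or.inl rfl)
    have z3120 : R 3 1 2 0 = 0 := hzero 3 1 2 0 (Or.inl rfl)
    have z3121 : R 3 1 2 1 = 0 := hzero 3 1 2 1 (Or.inl rfl)
    have z3122 : R 3 1 2 2 = 0 := hzero 3 1 2 2 (Or.inl rfl)
    have z3123 : R 3 1 2 3 = 0 := hzero 3 1 2 3 (Or.inl rfl)
    have z3130 : R 3 1 3 0 = 0 := hzero 3 1 3 0 (Or.inl rfl)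
    have z3131 : R 3 1 3 1 = 0 := hzero 3 1 3 1 (Or.inl rfl)
    have z3132 : R 3 1 3 2 = 0 := hzero 3 1 3 2 (Or.inl rfl)
    have z3133 : R 3 1 3 3 = 0 := hzero 3 1 3 3 (Or.inl rfl)
    have z3200 : R 3 2 0 0 = 0 := hzero 3 2 0 0 (Or.inl rfl)
    have z3201 : R 3 2 0 1 = 0 := hzero 3 2 0 1 (Or.inl rfl)
    have z3202 : R 3 2 0 2 = 0 := hzero 3 2 0 2 (Or.inl rfl)
    have z3203 : R 3 2 0 3 = 0 := hzero 3 2 0 3 (Or.inl rfl)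
    have z3210 : R 3 2 1 0 = 0 := hzero 3 2 1 0 (Or.inl rfl)
    have z3211 : R 3 2 1 1 = 0 := hzero 3 2 1 1 (Or.inl rfl)
    have z3212 : R 3 2 1 2 = 0 := hzero 3 2 1 2 (Or.inl rfl)
    have z3213 : R 3 2 1 3 = 0 := hzero 3 2 1 3 (Or.inl rfl)
    have z3220 : R 3 2 2 0 = 0 := hzero 3 2 2 0 (Or.inl rfl)
    have z3221 : R 3 2 2 1 = 0 := hzero 3 2 2 1 (Or.inl rfl)
    have z3222 : R 3 2 2 2 = 0 := hzero 3 2 2 2 (Or.inl rfl)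
    have z3223 : R 3 2 2 3 = 0 := hzero 3 2 2 3 (Or.inl rfl)
    have z3230 : R 3 2 3 0 = 0 := hzero 3 2 3 0 (Or.inl rfl)
    have z3231 : R 3 2 3 1 = 0 := hzero 3 2 3 1 (Or.inl rfl)
    have z3232 : R 3 2 3 2 = 0 := hzero 3 2 3 2 (Or.inl rfl)
    have z3233 : R 3 2 3 3 = 0 := hzero 3 2 3 3 (Or.inl rfl)
    have z3300 : R 3 3 0 0 = 0 := hzero 3 3 0 0 (Or.inl rfl)
    have z3301 : R 3 3 0 1 = 0 := hzero 3 3 0 1 (Or.inl rfl)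
    have z3302 : R 3 3 0 2 = 0 := hzero 3 3 0 2 (Or.inl rfl)
    have z3303 : R 3 3 0 3 = 0 := hzero 3 3 0 3 (Or.inl rfl)
    have z3310 : R 3 3 1 0 = 0 := hzero 3 3 1 0 (Or.inl rfl)
    have z3311 : R 3 3 1 1 = 0 := hzero 3 3 1 1 (Or.inl rfl)
    have z3312 : R 3 3 1 2 = 0 := hzero 3 3 1 2 (Or.inl rfl)
    have z3313 : R 3 3 1 3 = 0 := hzero 3 3 1 3 (Or.inl rfl)
    have z3320 : R 3 3 2 0 = 0 := hzero 3 3 2 0 (Or.inl rfl)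
    have z3321 : R 3 3 2 1 = 0 := hzero 3 3 2 1 (Or.inl rfl)
    have z3322 : R 3 3 2 2 = 0 := hzero 3 3 2 2 (Or.inl rfl)
    have z3323 : R 3 3 2 3 = 0 := hzero 3 3 2 3 (Or.inl rfl)
    have z3330 : R 3 3 3 0 = 0 := hzero 3 3 3 0 (Or.inl rfl)
    have z3331 : R 3 3 3 1 = 0 := hzero 3 3 3 1 (Or.inl rfl)
    have z3332 : R 3 3 3 2 = 0 := hzero 3 3 3 2 (Or.inl rfl)
    have z3333 : R 3 3 3 3 = 0 := hzero 3 3 3 3 (Or.inl rfl)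
    have f0000 : R 0 0 0 0 = R' 0 0 0 0 := hext 0 0 0 0
    have f0001 : R 0 0 0 1 = R' 0 0 0 1 := hext 0 0 0 1
    have f0002 : R 0 0 0 2 = R' 0 0 0 2 := hext 0 0 0 2
    have f0010 : R 0 0 1 0 = R' 0 0 1 0 := hext 0 0 1 0
    have f0011 : R 0 0 1 1 = R' 0 0 1 1 := hext 0 0 1 1
    have f0012 : R 0 0 1 2 = R' 0 0 1 2 := hext 0 0 1 2
    have f0020 : R 0 0 2 0 = R' 0 0 2 0 := hext 0 0 2 0
    have f0021 : R 0 0 2 1 = R' 0 0 2 1 := hext 0 0 2 1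
    have f0022 : R 0 0 2 2 = R' 0 0 2 2 := hext 0 0 2 2
    have f0100 : R 0 1 0 0 = R' 0 1 0 0 := hext 0 1 0 0
    have f0101 : R 0 1 0 1 = R' 0 1 0 1 := hext 0 1 0 1
    have f0102 : R 0 1 0 2 = R' 0 1 0 2 := hext 0 1 0 2
    have f0110 : R 0 1 1 0 = R' 0 1 1 0 := hext 0 1 1 0
    have f0111 : R 0 1 1 1 = R' 0 1 1 1 := hext 0 1 1 1
    have f0112 : R 0 1 1 2 = R' 0 1 1 2 := hext 0 1 1 2
    have f0120 : R 0 1 2 0 = R' 0 1 2 0 := hext 0 1 2 0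
    have f0121 : R 0 1 2 1 = R' 0 1 2 1 := hext 0 1 2 1
    have f0122 : R 0 1 2 2 = R' 0 1 2 2 := hext 0 1 2 2
    have f0200 : R 0 2 0 0 = R' 0 2 0 0 := hext 0 2 0 0
    have f0201 : R 0 2 0 1 = R' 0 2 0 1 := hext 0 2 0 1
    have f0202 : R 0 2 0 2 = R' 0 2 0 2 := hext 0 2 0 2
    have f0210 : R 0 2 1 0 = R' 0 2 1 0 := hext 0 2 1 0
    have f0211 : R 0 2 1 1 = R' 0 2 1 1 := hext 0 2 1 1
    have f0212 : R 0 2 1 2 = R' 0 2 1 2 := hext 0 2 1 2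
    have f0220 : R 0 2 2 0 = R' 0 2 2 0 := hext 0 2 2 0
    have f0221 : R 0 2 2 1 = R' 0 2 2 1 := hext 0 2 2 1
    have f0222 : R 0 2 2 2 = R' 0 2 2 2 := hext 0 2 2 2
    have f1000 : R 1 0 0 0 = R' 1 0 0 0 := hext 1 0 0 0
    have f1001 : R 1 0 0 1 = R' 1 0 0 1 := hext 1 0 0 1
    have f1002 : R 1 0 0 2 = R' 1 0 0 2 := hext 1 0 0 2
    have f1010 : R 1 0 1 0 = R' 1 0 1 0 := hext 1 0 1 0
    have f1011 : R 1 0 1 1 = R' 1 0 1 1 := hext 1 0 1 1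
    have f1012 : R 1 0 1 2 = R' 1 0 1 2 := hext 1 0 1 2
    have f1020 : R 1 0 2 0 = R' 1 0 2 0 := hext 1 0 2 0
    have f1021 : R 1 0 2 1 = R' 1 0 2 1 := hext 1 0 2 1
    have f1022 : R 1 0 2 2 = R' 1 0 2 2 := hext 1 0 2 2
    have f1100 : R 1 1 0 0 = R' 1 1 0 0 := hext 1 1 0 0
    have f1101 : R 1 1 0 1 = R' 1 1 0 1 := hext 1 1 0 1
    have f1102 : R 1 1 0 2 = R' 1 1 0 2 := hext 1 1 0 2
    have f1110 : R 1 1 1 0 = R' 1 1 1 0 := hext 1 1 1 0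
    have f1111 : R 1 1 1 1 = R' 1 1 1 1 := hext 1 1 1 1
    have f1112 : R 1 1 1 2 = R' 1 1 1 2 := hext 1 1 1 2
    have f1120 : R 1 1 2 0 = R' 1 1 2 0 := hext 1 1 2 0
    have f1121 : R 1 1 2 1 = R' 1 1 2 1 := hext 1 1 2 1
    have f1122 : R 1 1 2 2 = R' 1 1 2 2 := hext 1 1 2 2
    have f1200 : R 1 2 0 0 = R' 1 2 0 0 := hext 1 2 0 0
    have f1201 : R 1 2 0 1 = R' 1 2 0 1 := hext 1 2 0 1
    have f1202 : R 1 2 0 2 = R' 1 2 0 2 := hext 1 2 0 2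
    have f1210 : R 1 2 1 0 = R' 1 2 1 0 := hext 1 2 1 0
    have f1211 : R 1 2 1 1 = R' 1 2 1 1 := hext 1 2 1 1
    have f1212 : R 1 2 1 2 = R' 1 2 1 2 := hext 1 2 1 2
    have f1220 : R 1 2 2 0 = R' 1 2 2 0 := hext 1 2 2 0
    have f1221 : R 1 2 2 1 = R' 1 2 2 1 := hext 1 2 2 1
    have f1222 : R 1 2 2 2 = R' 1 2 2 2 := hext 1 2 2 2
    have f2000 : R 2 0 0 0 = R' 2 0 0 0 := hext 2 0 0 0
    have f2001 : R 2 0 0 1 = R' 2 0 0 1 := hext 2 0 0 1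
    have f2002 : R 2 0 0 2 = R' 2 0 0 2 := hext 2 0 0 2
    have f2010 : R 2 0 1 0 = R' 2 0 1 0 := hext 2 0 1 0
    have f2011 : R 2 0 1 1 = R' 2 0 1 1 := hext 2 0 1 1
    have f2012 : R 2 0 1 2 = R' 2 0 1 2 := hext 2 0 1 2
    have f2020 : R 2 0 2 0 = R' 2 0 2 0 := hext 2 0 2 0
    have f2021 : R 2 0 2 1 = R' 2 0 2 1 := hext 2 0 2 1
    have f2022 : R 2 0 2 2 = R' 2 0 2 2 := hext 2 0 2 2
    have f2100 : R 2 1 0 0 = R' 2 1 0 0 := hext 2 1 0 0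
    have f2101 : R 2 1 0 1 = R' 2 1 0 1 := hext 2 1 0 1
    have f2102 : R 2 1 0 2 = R' 2 1 0 2 := hext 2 1 0 2
    have f2110 : R 2 1 1 0 = R' 2 1 1 0 := hext 2 1 1 0
    have f2111 : R 2 1 1 1 = R' 2 1 1 1 := hext 2 1 1 1
    have f2112 : R 2 1 1 2 = R' 2 1 1 2 := hext 2 1 1 2
    have f2120 : R 2 1 2 0 = R' 2 1 2 0 := hext 2 1 2 0
    have f2121 : R 2 1 2 1 = R' 2 1 2 1 := hext 2 1 2 1
    have f2122 : R 2 1 2 2 = R' 2 1 2 2 := hext 2 1 2 2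
    have f2200 : R 2 2 0 0 = R' 2 2 0 0 := hext 2 2 0 0
    have f2201 : R 2 2 0 1 = R' 2 2 0 1 := hext 2 2 0 1
    have f2202 : R 2 2 0 2 = R' 2 2 0 2 := hext 2 2 0 2
    have f2210 : R 2 2 1 0 = R' 2 2 1 0 := hext 2 2 1 0
    have f2211 : R 2 2 1 1 = R' 2 2 1 1 := hext 2 2 1 1
    have f2212 : R 2 2 1 2 = R' 2 2 1 2 := hext 2 2 1 2
    have f2220 : R 2 2 2 0 = R' 2 2 2 0 := hext 2 2 2 0
    have f2221 : R 2 2 2 1 = R' 2 2 2 1 := hext 2 2 2 1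
    have f2222 : R 2 2 2 2 = R' 2 2 2 2 := hext 2 2 2 2
    simp only [Ric, scalCurv, normR2, normRic2, Fin.sum_univ_four, Fin.sum_univ_three,
      z0003, z0013, z0023, z0030, z0031, z0032, z0033, z0103, z0113, z0123, z0130, z0131, z0132, z0133, z0203, z0213, z0223, z0230, z0231, z0232, z0233, z0300, z0301, z0302, z0303, z0310, z0311, z0312, z0313, z0320, z0321, z0322, z0323, z0330, z0331, z0332, z0333, z1003, z1013, z1023, z1030, z1031, z1032, z1033, z1103, z1113, z1123, z1130, z1131, z1132, z1133, z1203, z1213, z1223, z1230, z1231, z1232, z1233, z1300, z1301, z1302, z1303, z1310, z1311, z1312, z1313, z1320, z1321, z1322, z1323, z1330, z1331, z1332, z1333, z2003, z2013, z2023, z2030, z2031, z2032, z2033, z2103, z2113, z2123, z2130, z2131, z2132, z2133, z2203, z2213, z2223, z2230, z2231, z2232, z2233, z2300, z2301, z2302, z2303, z2310, z2311, z2312, z2313, z2320, z2321, z2322, z2323, z2330, z2331, z2332, z2333, z3000, z3001, z3002, z3003, z3010, z3011, z3012, z3013, z3020, z3021, z3022, z3023, z3030, z3031, z3032, z3033,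 z3100, z3101, z3102, z3103, z3110, z3111, z3112, z3113, z3120, z3121, z3122, z3123, z3130, z3131, z3132, z3133, z3200, z3201, z3202, z3203, z3210, z3211, z3212, z3213, z3220, z3221, z3222, z3223, z3230, z3231, z3232, z3233, z3300, z3301, z3302, z3303, z3310, z3311, z3312, z3313, z3320, z3321, z3322, z3323, z3330, z3331, z3332, z3333, f0000, f0001, f0002, f0010, f0011, f0012, f0020, f0021, f0022, f0100, f0101, f0102, f0110, f0111, f0112, f0120, f0121, f0122, f0200, f0201, f0202, f0210, f0211, f0212, f0220, f0221, f0222, f1000, f1001, f1002, f1010, f1011, f1012, f1020, f1021, f1022, f1100, f1101, f1102, f1110, f1111, f1112, f1120, f1121, f1122, f1200, f1201, f1202, f1210, f1211, f1212, f1220, f1221, f1222, f2000, f2001, f2002, f2010, f2011, f2012, f2020, f2021, f2022, f2100, f2101, f2102, f2110, f2111, f2112, f2120, f2121, f2122, f2200, f2201, f2202, f2210, f2211, f2212, f2220, f2221, f2222]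
    ring
  · simp only [Ric, scalCurv, normR2, normRic2, Fin.sum_univ_three]
    have e0000 : R' 0 0 0 0 = 0 := by linarith [h1 0 0 0 0]
    have e0001 : R' 0 0 0 1 = 0 := by linarith [h1 0 0 0 1]
    have e0002 : R' 0 0 0 2 = 0 := by linarith [h1 0 0 0 2]
    have e0010 : R' 0 0 1 0 = 0 := by linarith [h1 0 0 1 0]
    have e0011 : R' 0 0 1 1 = 0 := by linarith [h1 0 0 1 1]
    have e0012 : R' 0 0 1 2 = 0 := by linarith [h1 0 0 1 2]
    have e0020 : R' 0 0 2 0 = 0 := by linarith [h1 0 0 2 0]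
    have e0021 : R' 0 0 2 1 = 0 := by linarith [h1 0 0 2 1]
    have e0022 : R' 0 0 2 2 = 0 := by linarith [h1 0 0 2 2]
    have e0100 : R' 0 1 0 0 = 0 := by linarith [h2 0 1 0 0]
    have e0110 : R' 0 1 1 0 = -R' 0 1 0 1 := by linarith [h2 0 1 1 0]
    have e0111 : R' 0 1 1 1 = 0 := by linarith [h2 0 1 1 1]
    have e0120 : R' 0 1 2 0 = -R' 0 1 0 2 := by linarith [h2 0 1 2 0]
    have e0121 : R' 0 1 2 1 = -R' 0 1 1 2 := by linarith [h2 0 1 2 1]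
    have e0122 : R' 0 1 2 2 = 0 := by linarith [h2 0 1 2 2]
    have e0200 : R' 0 2 0 0 = 0 := by linarith [h2 0 2 0 0]
    have e0201 : R' 0 2 0 1 = R' 0 1 0 2 := by linarith [h3 0 2 0 1]
    have e0210 : R' 0 2 1 0 = -R' 0 1 0 2 := by linarith [h2 0 2 1 0, h3 0 2 0 1]
    have e0211 : R' 0 2 1 1 = 0 := by linarith [h2 0 2 1 1]
    have e0220 : R' 0 2 2 0 = -R' 0 2 0 2 := by linarith [h2 0 2 2 0]
    have e0221 : R' 0 2 2 1 = -R' 0 2 1 2 := by linarith [h2 0 2 2 1]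
    have e0222 : R' 0 2 2 2 = 0 := by linarith [h2 0 2 2 2]
    have e1000 : R' 1 0 0 0 = 0 := by linarith [h2 1 0 0 0]
    have e1001 : R' 1 0 0 1 = -R' 0 1 0 1 := by linarith [h1 1 0 0 1]
    have e1002 : R' 1 0 0 2 = -R' 0 1 0 2 := by linarith [h1 1 0 0 2]
    have e1010 : R' 1 0 1 0 = R' 0 1 0 1 := by linarith [h1 1 0 1 0, h2 0 1 1 0]
    have e1011 : R' 1 0 1 1 = 0 := by linarith [h2 1 0 1 1]
    have e1012 : R' 1 0 1 2 = -R' 0 1 1 2 := by linarith [h1 1 0 1 2]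
    have e1020 : R' 1 0 2 0 = R' 0 1 0 2 := by linarith [h1 1 0 2 0, h2 0 1 2 0]
    have e1021 : R' 1 0 2 1 = R' 0 1 1 2 := by linarith [h1 1 0 2 1, h2 0 1 2 1]
    have e1022 : R' 1 0 2 2 = 0 := by linarith [h2 1 0 2 2]
    have e1100 : R' 1 1 0 0 = 0 := by linarith [h1 1 1 0 0]
    have e1101 : R' 1 1 0 1 = 0 := by linarith [h1 1 1 0 1]
    have e1102 : R' 1 1 0 2 = 0 := by linarith [h1 1 1 0 2]
    have e1110 : R' 1 1 1 0 = 0 := by linarith [h1 1 1 1 0]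
    have e1111 : R' 1 1 1 1 = 0 := by linarith [h1 1 1 1 1]
    have e1112 : R' 1 1 1 2 = 0 := by linarith [h1 1 1 1 2]
    have e1120 : R' 1 1 2 0 = 0 := by linarith [h1 1 1 2 0]
    have e1121 : R' 1 1 2 1 = 0 := by linarith [h1 1 1 2 1]
    have e1122 : R' 1 1 2 2 = 0 := by linarith [h1 1 1 2 2]
    have e1200 : R' 1 2 0 0 = 0 := by linarith [h2 1 2 0 0]
    have e1201 : R' 1 2 0 1 = R' 0 1 1 2 := by linarith [h3 1 2 0 1]
    have e1202 : R' 1 2 0 2 = R' 0 2 1 2 := by linarith [h3 1 2 0 2]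
    have e1210 : R' 1 2 1 0 = -R' 0 1 1 2 := by linarith [h2 1 2 1 0, h3 1 2 0 1]
    have e1211 : R' 1 2 1 1 = 0 := by linarith [h2 1 2 1 1]
    have e1220 : R' 1 2 2 0 = -R' 0 2 1 2 := by linarith [h2 1 2 2 0, h3 1 2 0 2]
    have e1221 : R' 1 2 2 1 = -R' 1 2 1 2 := by linarith [h2 1 2 2 1]
    have e1222 : R' 1 2 2 2 = 0 := by linarith [h2 1 2 2 2]
    have e2000 : R' 2 0 0 0 = 0 := by linarith [h2 2 0 0 0]
    have e2001 : R' 2 0 0 1 = -R' 0 1 0 2 := by linarith [h1 2 0 0 1, h3 0 2 0 1]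
    have e2002 : R' 2 0 0 2 = -R' 0 2 0 2 := by linarith [h1 2 0 0 2]
    have e2010 : R' 2 0 1 0 = R' 0 1 0 2 := by linarith [h1 2 0 1 0, h2 0 2 1 0, h3 0 2 0 1]
    have e2011 : R' 2 0 1 1 = 0 := by linarith [h2 2 0 1 1]
    have e2012 : R' 2 0 1 2 = -R' 0 2 1 2 := by linarith [h1 2 0 1 2]
    have e2020 : R' 2 0 2 0 = R' 0 2 0 2 := by linarith [h1 2 0 2 0, h2 0 2 2 0]
    have e2021 : R' 2 0 2 1 = R' 0 2 1 2 := by linarith [h1 2 0 2 1, h2 0 2 2 1]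
    have e2022 : R' 2 0 2 2 = 0 := by linarith [h2 2 0 2 2]
    have e2100 : R' 2 1 0 0 = 0 := by linarith [h2 2 1 0 0]
    have e2101 : R' 2 1 0 1 = -R' 0 1 1 2 := by linarith [h1 2 1 0 1, h3 1 2 0 1]
    have e2102 : R' 2 1 0 2 = -R' 0 2 1 2 := by linarith [h1 2 1 0 2, h3 1 2 0 2]
    have e2110 : R' 2 1 1 0 = R' 0 1 1 2 := by linarith [h1 2 1 1 0, h2 1 2 1 0, h3 1 2 0 1]
    have e2111 : R' 2 1 1 1 = 0 := by linarith [h2 2 1 1 1]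
    have e2112 : R' 2 1 1 2 = -R' 1 2 1 2 := by linarith [h1 2 1 1 2]
    have e2120 : R' 2 1 2 0 = R' 0 2 1 2 := by linarith [h1 2 1 2 0, h2 1 2 2 0, h3 1 2 0 2]
    have e2121 : R' 2 1 2 1 = R' 1 2 1 2 := by linarith [h1 2 1 2 1, h2 1 2 2 1]
    have e2122 : R' 2 1 2 2 = 0 := by linarith [h2 2 1 2 2]
    have e2200 : R' 2 2 0 0 = 0 := by linarith [h1 2 2 0 0]
    have e2201 : R' 2 2 0 1 = 0 := by linarith [h1 2 2 0 1]
    have e2202 : R' 2 2 0 2 = 0 := by linarith [h1 2 2 0 2]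
    have e2210 : R' 2 2 1 0 = 0 := by linarith [h1 2 2 1 0]
    have e2211 : R' 2 2 1 1 = 0 := by linarith [h1 2 2 1 1]
    have e2212 : R' 2 2 1 2 = 0 := by linarith [h1 2 2 1 2]
    have e2220 : R' 2 2 2 0 = 0 := by linarith [h1 2 2 2 0]
    have e2221 : R' 2 2 2 1 = 0 := by linarith [h1 2 2 2 1]
    have e2222 : R' 2 2 2 2 = 0 := by linarith [h1 2 2 2 2]
    ring_nf
    simp only [e0000, e0001, e0002, e0010, e0011, e0012, e0020, e0021, e0022, e0100, e0110, e0111, e0120, e0121, e0122, e0200, e0201, e0210, e0211, e0220, e0221, e0222, e1000, e1001, e1002, e1010, e1011, e1012, e1020, e1021, e1022, e1100, e1101, e1102, e1110, e1111, e1112, e1120, e1121, e1122, e1200, e1201, e1202, e1210, e1211, e1220, e1221, e1222, e2000, e2001, e2002, e2010, e2011, e2012, e2020, e2021, e2022, e2100, e2101, e2102, e2110, e2111, e2112, e2120, e2121, e2122, e2200, e2201, e2202, e2210, e2211, e2212, e2220, e2221, e2222]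
    ring
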